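/- Closed form of the Fresnel sinc-quadrature function: let k > 0, z > 0, δ > 0 be real and set W = 1/(2δ). For every real X, δ ∫_{−W}^{W} exp(−i(2π²z/k)ξ²) e^{2πiXξ} dξ = (δ/π) √(k/(2z)) exp(i k X²/(2z)) · ( C(μ₂) − C(μ₁) − i (S(μ₂) − S(μ₁)) ), where μ₁ = −π√(2z/k) W − √(k/(2z)) X and μ₂ = π√(2z/k) W − √(k/(2z)) X. -/

import Mathlib

open Real

/-- The Fresnel cosine integral `C(x) = ∫₀ˣ cos(μ²) dμ`. -/
noncomputable def fresnelC (x : ℝ) : ℝ := ∫ μ in (0:ℝ)..x, Real.cos (μ ^ 2)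

/-- The Fresnel sine integral `S(x) = ∫₀ˣ sin(μ²) dμ`. -/
noncomputable def fresnelS (x : ℝ) : ℝ := ∫ μ in (0:ℝ)..x, Real.sin (μ ^ 2)

/-- Closed form of the one-dimensional Fresnel sinc-quadrature function
`φ(X) = δ ∫_{−W}^{W} exp(−i(2π²z/k)ξ²) e^{2πiXξ} dξ`, with `W = 1/(2δ)`, in terms of the
Fresnel cosine and sine integrals. -/
theorem fresnel_weights_closed_form (k z δ : ℝ) (hk : 0 < k) (hz : 0 < z) (hδ : 0 < δ)
    (W : ℝ) (hW : W = 1 / (2 * δ)) (X : ℝ) (μ₁ μ₂ : ℝ)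
    (hμ₁ : μ₁ = -π * Real.sqrt (2 * z / k) * W - Real.sqrt (k / (2 * z)) * X)
    (hμ₂ : μ₂ = π * Real.sqrt (2 * z / k) * W - Real.sqrt (k / (2 * z)) * X) :
    (δ : ℂ) * ∫ ξ in (-W)..W,
        Complex.exp (-Complex.I * (2 * (π : ℂ) ^ 2 * z / k) * ξ ^ 2) *
          Complex.exp (2 * (π : ℂ) * Complex.I * X * ξ) =
      ((δ / π : ℝ) : ℂ) * (Real.sqrt (k / (2 * z)) : ℂ) *
        Complex.exp (Complex.I * k * X ^ 2 / (2 * z)) *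
        (((fresnelC μ₂ - fresnelC μ₁ : ℝ) : ℂ) -
          Complex.I * ((fresnelS μ₂ - fresnelS μ₁ : ℝ) : ℂ)) := by
  have hπ : (0:ℝ) < π := Real.pi_pos
  set a : ℝ := 2 * π ^ 2 * z / k with ha_def
  have ha : 0 < a := by positivity
  set s : ℝ := Real.sqrt a with hs_def
  have hs : 0 < s := Real.sqrt_pos.mpr ha
  have hs2 : s ^ 2 = a := Real.sq_sqrt ha.le
  set c : ℝ := π * X / a with hc_def
  -- key real identities
  have hac : a * c = π * X := by rw [hc_def]; field_simp
  have hac2 : a * c ^ 2 = k * X ^ 2 / (2 * z) := by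
    rw [hc_def, ha_def]; field_simp
  have hsqrt1 : Real.sqrt (k / (2 * z)) = π / s := by
    have h : k / (2 * z) = (π / s) ^ 2 := by
      rw [div_pow, hs2, ha_def]; field_simp
    rw [h, Real.sqrt_sq (by positivity)]
  have hsqrt2 : π * Real.sqrt (2 * z / k) = s := by
    have h : a = π ^ 2 * (2 * z / k) := by rw [ha_def]; ring
    rw [hs_def, h, Real.sqrt_mul (by positivity), Real.sqrt_sq hπ.le]
  have hcs : c * s = Real.sqrt (k / (2 * z)) * X := by
    rw [hsqrt1, hc_def, ← hs2]; field_simp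
  have e1 : -W * s - c * s = μ₁ := by rw [hμ₁, hcs, ← hsqrt2]; ring
  have e2 : W * s - c * s = μ₂ := by rw [hμ₂, hcs, ← hsqrt2]; ring
  -- step 1: complete the square in the integrand
  have hstep1 : ∀ ξ : ℝ,
      Complex.exp (-Complex.I * (2 * (π : ℂ) ^ 2 * z / k) * (ξ:ℂ) ^ 2) *
        Complex.exp (2 * (π : ℂ) * Complex.I * X * ξ) =
      Complex.exp (Complex.I * k * X ^ 2 / (2 * z)) *
        Complex.exp (-Complex.I * ((ξ * s - c * s : ℝ) : ℂ) ^ 2) := by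
    intro ξ
    rw [← Complex.exp_add, ← Complex.exp_add]
    congr 1
    have h1 : ((a:ℝ):ℂ) = 2 * (π : ℂ) ^ 2 * z / k := by
      rw [ha_def]; push_cast [ne_of_gt hk]; ring
    have h2 : ((s:ℝ):ℂ)^2 = (a:ℂ) := by exact_mod_cast congrArg (Complex.ofReal ·) hs2
    have h3 : ((a:ℝ):ℂ) * c = (π:ℂ) * X := by exact_mod_cast congrArg (Complex.ofReal ·) hac
    have h4 : ((a:ℝ):ℂ) * (c:ℂ)^2 = (k:ℂ) * X^2 / (2*z) := by
      exact_mod_cast congrArg (Complex.ofReal ·) hac2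
    rw [← h1]
    push_cast
    linear_combination Complex.I * ((ξ:ℂ) - c)^2 * h2 - 2 * Complex.I * (ξ:ℂ) * h3 +
      Complex.I * h4
  rw [intervalIntegral.integral_congr (g := fun ξ : ℝ =>
      Complex.exp (Complex.I * k * X ^ 2 / (2 * z)) *
        Complex.exp (-Complex.I * ((ξ * s - c * s : ℝ) : ℂ) ^ 2))
      (fun ξ _ => hstep1 ξ)]
  rw [intervalIntegral.integral_const_mul]
  -- step 2: linear change of variables
  have hsub : (∫ ξ in (-W)..W, Complex.exp (-Complex.I * ((ξ * s - c * s : ℝ) : ℂ) ^ 2))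
      = s⁻¹ • ∫ x in μ₁..μ₂, Complex.exp (-Complex.I * ((x : ℝ) : ℂ) ^ 2) := by
    have h := intervalIntegral.integral_comp_mul_right
      (a := -W) (b := W) (f := fun x : ℝ => Complex.exp (-Complex.I * ((x - c * s : ℝ) : ℂ) ^ 2))
      (ne_of_gt hs)
    rw [h, intervalIntegral.integral_comp_sub_right
      (fun x : ℝ => Complex.exp (-Complex.I * ((x : ℝ) : ℂ) ^ 2)) (c * s), e1, e2]
  rw [hsub]
  -- step 3: split into Fresnel integrals
  have hint : (∫ x in μ₁..μ₂, Complex.exp (-Complex.I * ((x : ℝ) : ℂ) ^ 2))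
      = ((fresnelC μ₂ - fresnelC μ₁ : ℝ) : ℂ) -
          Complex.I * ((fresnelS μ₂ - fresnelS μ₁ : ℝ) : ℂ) := by
    have heq : ∀ x : ℝ, Complex.exp (-Complex.I * ((x : ℝ) : ℂ) ^ 2)
        = ((Real.cos (x ^ 2) : ℝ) : ℂ) - Complex.I * ((Real.sin (x ^ 2) : ℝ) : ℂ) := by
      intro x
      have h : -Complex.I * ((x : ℝ) : ℂ) ^ 2 = (-(x^2 : ℝ) : ℂ) * Complex.I := by
        push_cast; ring
      rw [h, Complex.exp_mul_I]
      push_cast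
      rw [Complex.cos_neg, Complex.sin_neg]
      ring
    rw [intervalIntegral.integral_congr (fun x _ => heq x)]
    have hic : ∀ u v : ℝ, IntervalIntegrable (fun x : ℝ => ((Real.cos (x^2) : ℝ) : ℂ))
        MeasureTheory.volume u v :=
      fun u v => Continuous.intervalIntegrable (by fun_prop) u v
    have his : ∀ u v : ℝ, IntervalIntegrable (fun x : ℝ => Complex.I * ((Real.sin (x^2) : ℝ) : ℂ))
        MeasureTheory.volume u v :=
      fun u v => Continuous.intervalIntegrable (by fun_prop) u v
    rw [intervalIntegral.integral_sub (hic _ _) (his _ _),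
      intervalIntegral.integral_const_mul, intervalIntegral.integral_ofReal,
      intervalIntegral.integral_ofReal]
    have hCc : ∀ u v : ℝ, IntervalIntegrable (fun x : ℝ => Real.cos (x^2))
        MeasureTheory.volume u v :=
      fun u v => Continuous.intervalIntegrable (by fun_prop) u v
    have hSc : ∀ u v : ℝ, IntervalIntegrable (fun x : ℝ => Real.sin (x^2))
        MeasureTheory.volume u v :=
      fun u v => Continuous.intervalIntegrable (by fun_prop) u v
    have hC : (∫ x in μ₁..μ₂, Real.cos (x^2)) = fresnelC μ₂ - fresnelC μ₁ := by
      rw [fresnelC, fresnelC, intervalIntegral.integral_interval_sub_left (hCc _ _) (hCc _ _)]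
    have hS : (∫ x in μ₁..μ₂, Real.sin (x^2)) = fresnelS μ₂ - fresnelS μ₁ := by
      rw [fresnelS, fresnelS, intervalIntegral.integral_interval_sub_left (hSc _ _) (hSc _ _)]
    rw [hC, hS]
  rw [hint, Complex.real_smul]
  -- final algebra
  have hπc : ((π:ℝ):ℂ) ≠ 0 := by exact_mod_cast ne_of_gt hπ
  have hsc : ((s:ℝ):ℂ) ≠ 0 := by exact_mod_cast ne_of_gt hs
  have key : ((δ:ℝ):ℂ) * ((s⁻¹ : ℝ):ℂ) = ((δ / π : ℝ) : ℂ) * ((Real.sqrt (k / (2 * z)) : ℝ):ℂ) := by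
    rw [hsqrt1]
    push_cast
    field_simp
  linear_combination Complex.exp (Complex.I * k * X ^ 2 / (2 * z)) *
      (((fresnelC μ₂ - fresnelC μ₁ : ℝ) : ℂ) -
        Complex.I * ((fresnelS μ₂ - fresnelS μ₁ : ℝ) : ℂ)) * key
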